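/- Reordering executions when v = 0: In a round-based register protocol with visibility range v = 0, every abstract execution σ_init →* σ can be reordered into an abstract execution σ_init →* σ' with S(σ) ⊆ S(σ'), W(σ) = W(σ'), and whose schedule is sorted by round: all moves on round 0 occur first, then all moves on round 1, and so on. -/

import Mathlib

open scoped Classical

/-- Actions of a round-based register protocol: round increment, read of value `x`
from register `α` of round `k - i`, and write of value `x` to register `α` of the
current round. -/
inductive Act (dim : ℕ) (D : Type) where
  | incr : Act dim D
  | read (i : ℕ) (α : Fin dim) (x : D) : Act dim D
  | write (α : Fin dim) (x : D) : Act dim D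

/-- A round-based register protocol. -/
structure Protocol (Q D : Type) (dim : ℕ) where
  q0 : Q
  d0 : D
  v : ℕ
  T : Set (Q × Act dim D × Q)
  read_le : ∀ q i α x q', (q, Act.read i α x, q') ∈ T → i ≤ v
  write_ne : ∀ q α x q', (q, Act.write α x, q') ∈ T → x ≠ d0

/-- A move: a transition together with the round on which it is performed. -/
abbrev Move (Q D : Type) (dim : ℕ) := (Q × Act dim D × Q) × ℕ

/-- A concrete configuration: a finitely supported multiset of locations and a
valuation of all registers. -/
structure Conc (Q D : Type) (dim : ℕ) where
  loc : (Q × ℕ) →₀ ℕ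
  reg : ℕ → Fin dim → D

variable {Q D : Type} {dim : ℕ}

/-- Value read from register `α` of round `k - i` (registers of negative rounds
hold the initial value). -/
def regVal (P : Protocol Q D dim) (γ : Conc Q D dim) (k i : ℕ) (α : Fin dim) : D :=
  if i ≤ k then γ.reg (k - i) α else P.d0

/-- Updating register `α` of round `k` to value `x`. -/
def updReg (r : ℕ → Fin dim → D) (k : ℕ) (α : Fin dim) (x : D) : ℕ → Fin dim → D :=
  fun k' α' => if k' = k ∧ α' = α then x else r k' α'

/-- Concrete step relation of a round-based register protocol. -/
inductive ConcStep [DecidableEq Q] (P : Protocol Q D dim) :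
    Conc Q D dim → Move Q D dim → Conc Q D dim → Prop where
  | incr {q q' : Q} {k : ℕ} {γ γ' : Conc Q D dim} :
      (q, Act.incr, q') ∈ P.T → 0 < γ.loc (q, k) →
      γ'.loc = γ.loc - Finsupp.single (q, k) 1 + Finsupp.single (q', k + 1) 1 →
      γ'.reg = γ.reg →
      ConcStep P γ ((q, Act.incr, q'), k) γ'
  | read {q q' : Q} {k i : ℕ} {α : Fin dim} {x : D} {γ γ' : Conc Q D dim} :
      (q, Act.read i α x, q') ∈ P.T → 0 < γ.loc (q, k) →
      regVal P γ k i α = x →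
      γ'.loc = γ.loc - Finsupp.single (q, k) 1 + Finsupp.single (q', k) 1 →
      γ'.reg = γ.reg →
      ConcStep P γ ((q, Act.read i α x, q'), k) γ'
  | write {q q' : Q} {k : ℕ} {α : Fin dim} {x : D} {γ γ' : Conc Q D dim} :
      (q, Act.write α x, q') ∈ P.T → 0 < γ.loc (q, k) →
      γ'.loc = γ.loc - Finsupp.single (q, k) 1 + Finsupp.single (q', k) 1 →
      γ'.reg = updReg γ.reg k α x →
      ConcStep P γ ((q, Act.write α x, q'), k) γ'

/-- Concrete reachability. -/
def ConcReach [DecidableEq Q] (P : Protocol Q D dim) : Conc Q D dim → Conc Q D dim → Prop :=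
  Relation.ReflTransGen (fun γ γ' => ∃ m, ConcStep P γ m γ')

/-- Initial concrete configuration with `n` processes. -/
noncomputable def Conc.init [DecidableEq Q] (P : Protocol Q D dim) (n : ℕ) : Conc Q D dim :=
  ⟨Finsupp.single (P.q0, 0) n, fun _ _ => P.d0⟩

/-- Number of processes of a concrete configuration. -/
def Conc.size (γ : Conc Q D dim) : ℕ := γ.loc.sum fun _ n => n

/-- Support of the location multiset of a concrete configuration. -/
def Conc.supp (γ : Conc Q D dim) : Set (Q × ℕ) := {l | 0 < γ.loc l}

/-- The set of non-blank registers of a concrete configuration. -/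
def Conc.nonBlank (P : Protocol Q D dim) (γ : Conc Q D dim) : Set (ℕ × Fin dim) :=
  {r | γ.reg r.1 r.2 ≠ P.d0}

/-- An abstract configuration: a set of locations and a set of written registers. -/
structure Abs (Q : Type) (dim : ℕ) where
  S : Set (Q × ℕ)
  W : Set (ℕ × Fin dim)

/-- Abstract step relation. -/
inductive AbsStep (P : Protocol Q D dim) :
    Abs Q dim → Move Q D dim → Abs Q dim → Prop where
  | incr {σ : Abs Q dim} {q q' : Q} {k : ℕ} :
      (q, Act.incr, q') ∈ P.T → (q, k) ∈ σ.S →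
      AbsStep P σ ((q, Act.incr, q'), k) ⟨σ.S ∪ {(q', k + 1)}, σ.W⟩
  | readBlank {σ : Abs Q dim} {q q' : Q} {k i : ℕ} {α : Fin dim} :
      (q, Act.read i α P.d0, q') ∈ P.T → (q, k) ∈ σ.S →
      (i ≤ k → (k - i, α) ∉ σ.W) →
      AbsStep P σ ((q, Act.read i α P.d0, q'), k) ⟨σ.S ∪ {(q', k)}, σ.W⟩
  | readVal {σ : Abs Q dim} {q q' q1 q2 : Q} {k i : ℕ} {α : Fin dim} {x : D} :
      x ≠ P.d0 → (q, Act.read i α x, q') ∈ P.T → (q, k) ∈ σ.S →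
      i ≤ k → (k - i, α) ∈ σ.W →
      (q1, Act.write α x, q2) ∈ P.T → (q1, k - i) ∈ σ.S → (q2, k - i) ∈ σ.S →
      AbsStep P σ ((q, Act.read i α x, q'), k) ⟨σ.S ∪ {(q', k)}, σ.W⟩
  | write {σ : Abs Q dim} {q q' : Q} {k : ℕ} {α : Fin dim} {x : D} :
      (q, Act.write α x, q') ∈ P.T → (q, k) ∈ σ.S →
      AbsStep P σ ((q, Act.write α x, q'), k) ⟨σ.S ∪ {(q', k)}, σ.W ∪ {(k, α)}⟩

/-- Abstract reachability. -/
def AbsReach (P : Protocol Q D dim) : Abs Q dim → Abs Q dim → Prop :=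
  Relation.ReflTransGen (fun σ σ' => ∃ m, AbsStep P σ m σ')

/-- The initial abstract configuration. -/
def Abs.init (P : Protocol Q D dim) : Abs Q dim := ⟨{(P.q0, 0)}, ∅⟩

/-- Abstract execution along a list of moves. -/
inductive AbsRun (P : Protocol Q D dim) : Abs Q dim → List (Move Q D dim) → Abs Q dim → Prop
  | nil (σ : Abs Q dim) : AbsRun P σ [] σ
  | cons {σ σ' σ'' : Abs Q dim} {m : Move Q D dim} {ms : List (Move Q D dim)} :
      AbsStep P σ m σ' → AbsRun P σ' ms σ'' → AbsRun P σ (m :: ms) σ''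

/-- First-write order of a schedule, given a set of already written registers. -/
noncomputable def fwo (W : Set (ℕ × Fin dim)) : List (Move Q D dim) → List (ℕ × Fin dim)
  | [] => []
  | ((_, Act.write α _, _), k) :: ms =>
      if (k, α) ∈ W then fwo W ms else (k, α) :: fwo (W ∪ {(k, α)}) ms
  | _ :: ms => fwo W ms

/-- Projection of a sequence of registers onto those whose round lies in `[k - v, k]`. -/
def winproj (v k : ℕ) (F : List (ℕ × Fin dim)) : List (ℕ × Fin dim) :=
  F.filter (fun r => decide (k - v ≤ r.1 ∧ r.1 ≤ k))

section Aux

/-- Locations added by a move. -/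
def addS : Move Q D dim → Set (Q × ℕ)
  | ((_, Act.incr, q'), k) => {(q', k + 1)}
  | ((_, Act.read _ _ _, q'), k) => {(q', k)}
  | ((_, Act.write _ _, q'), k) => {(q', k)}

/-- Written registers added by a move. -/
def addW : Move Q D dim → Set (ℕ × Fin dim)
  | ((_, Act.write α _, _), k) => {(k, α)}
  | _ => ∅

lemma step_dest {P : Protocol Q D dim} {σ σ' : Abs Q dim} {m : Move Q D dim}
    (h : AbsStep P σ m σ') : σ' = ⟨σ.S ∪ addS m, σ.W ∪ addW m⟩ := by
  cases h <;> simp [addS, addW]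

lemma addS_round {m : Move Q D dim} : ∀ p ∈ addS m, m.2 ≤ p.2 := by
  rcases m with ⟨⟨q, a, q'⟩, k⟩
  cases a <;> simp [addS]

lemma addW_round {m : Move Q D dim} : ∀ r ∈ addW m, r.1 = m.2 := by
  rcases m with ⟨⟨q, a, q'⟩, k⟩
  cases a <;> simp [addW]

lemma step_lower {P : Protocol Q D dim} (hv : P.v = 0) {σ σ1 σ2 : Abs Q dim}
    {m : Move Q D dim} (h : AbsStep P σ1 m σ2)
    {A : Set (Q × ℕ)} {B : Set (ℕ × Fin dim)}
    (hS : σ1.S = σ.S ∪ A) (hW : σ1.W = σ.W ∪ B)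
    (hA : ∀ p ∈ A, m.2 < p.2) (hB : ∀ r ∈ B, m.2 < r.1) :
    AbsStep P σ m ⟨σ.S ∪ addS m, σ.W ∪ addW m⟩ := by
  cases h with
  | incr ht hq =>
      rw [hS] at hq
      have hq' := hq.resolve_right (fun h => by have := hA _ h; simp at this)
      simpa [addS, addW] using AbsStep.incr (P := P) ht hq'
  | readBlank ht hq hc =>
      rename_i q q' k i α
      have hi : i = 0 := by have := P.read_le _ _ _ _ _ ht; omega
      subst hi
      rw [hS] at hq
      have hq' := hq.resolve_right (fun h => by have := hA _ h; simp at this)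
      have hc' : 0 ≤ k → (k - 0, α) ∉ σ.W := by
        intro hk hmem
        exact hc hk (by rw [hW]; exact Or.inl hmem)
      simpa [addS, addW] using AbsStep.readBlank (P := P) ht hq' hc'
  | readVal hx ht hq hik hw ht2 h1 h2 =>
      rename_i q q' q1 q2 k i α x
      have hi : i = 0 := by have := P.read_le _ _ _ _ _ ht; omega
      subst hi
      rw [hS] at hq h1 h2
      rw [hW] at hw
      simp only [Nat.sub_zero] at *
      have hq' := hq.resolve_right (fun h => by have := hA _ h; simp at this)
      have h1' := h1.resolve_right (fun h => by have := hA _ h; simp at this)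
      have h2' := h2.resolve_right (fun h => by have := hA _ h; simp at this)
      have hw' := hw.resolve_right (fun h => by have := hB _ h; simp at this)
      simpa [addS, addW] using
        AbsStep.readVal (P := P) hx ht hq' (Nat.zero_le k) (by simpa using hw') ht2 h1' h2'
  | write ht hq =>
      rw [hS] at hq
      have hq' := hq.resolve_right (fun h => by have := hA _ h; simp at this)
      simpa [addS, addW] using AbsStep.write (P := P) ht hq'

lemma step_raise {P : Protocol Q D dim} (hv : P.v = 0) {σ σ2 τ : Abs Q dim}
    {m : Move Q D dim} (h : AbsStep P σ m σ2)
    {B : Set (ℕ × Fin dim)}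
    (hS : σ.S ⊆ τ.S) (hW : τ.W = σ.W ∪ B) (hB : ∀ r ∈ B, r.1 < m.2) :
    AbsStep P τ m ⟨τ.S ∪ addS m, τ.W ∪ addW m⟩ := by
  cases h with
  | incr ht hq =>
      simpa [addS, addW] using AbsStep.incr (P := P) ht (hS hq)
  | readBlank ht hq hc =>
      rename_i q q' k i α
      have hi : i = 0 := by have := P.read_le _ _ _ _ _ ht; omega
      subst hi
      have hc' : 0 ≤ k → (k - 0, α) ∉ τ.W := by
        intro hk hmem
        rw [hW] at hmem
        rcases hmem with hmem | hmem
        · exact hc hk hmem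
        · have := hB _ hmem; simp at this
      simpa [addS, addW] using AbsStep.readBlank (P := P) ht (hS hq) hc'
  | readVal hx ht hq hik hw ht2 h1 h2 =>
      rename_i q q' q1 q2 k i α x
      have hw' : (k - i, α) ∈ τ.W := by rw [hW]; exact Or.inl hw
      simpa [addS, addW] using
        AbsStep.readVal (P := P) hx ht (hS hq) hik hw' ht2 (hS h1) (hS h2)
  | write ht hq =>
      simpa [addS, addW] using AbsStep.write (P := P) ht (hS hq)

lemma swap_step {P : Protocol Q D dim} (hv : P.v = 0) {σ σ1 σ2 : Abs Q dim}
    {m1 m2 : Move Q D dim} (hk : m2.2 < m1.2)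
    (h1 : AbsStep P σ m1 σ1) (h2 : AbsStep P σ1 m2 σ2) :
    ∃ σm, AbsStep P σ m2 σm ∧ AbsStep P σm m1 σ2 := by
  have hd1 := step_dest h1
  have hd2 := step_dest h2
  refine ⟨⟨σ.S ∪ addS m2, σ.W ∪ addW m2⟩, ?_, ?_⟩
  · exact step_lower hv h2 (by rw [hd1]) (by rw [hd1])
      (fun p hp => lt_of_lt_of_le hk (addS_round p hp))
      (fun r hr => by rw [addW_round r hr]; exact hk)
  · have hstep := step_raise hv h1 (τ := ⟨σ.S ∪ addS m2, σ.W ∪ addW m2⟩)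
      (Set.subset_union_left) rfl (fun r hr => by rw [addW_round r hr]; exact hk)
    have : σ2 = ⟨σ.S ∪ addS m2 ∪ addS m1, σ.W ∪ addW m2 ∪ addW m1⟩ := by
      rw [hd2, hd1]
      exact congrArg₂ Abs.mk (Set.union_right_comm _ _ _) (Set.union_right_comm _ _ _)
    rw [this]
    exact hstep

lemma run_insert {P : Protocol Q D dim} (hv : P.v = 0) :
    ∀ (ms : List (Move Q D dim)) (σ σ1 σ' : Abs Q dim) (m : Move Q D dim),
    List.Pairwise (· ≤ ·) (ms.map Prod.snd) →
    AbsStep P σ m σ1 → AbsRun P σ1 ms σ' →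
    ∃ ms', AbsRun P σ ms' σ' ∧ ms'.Perm (m :: ms) ∧
      List.Pairwise (· ≤ ·) (ms'.map Prod.snd)
  | [], σ, σ1, σ', m, _, hstep, hrun => by
      cases hrun
      exact ⟨[m], .cons hstep (.nil _), .refl _, by simp⟩
  | m2 :: ms, σ, σ1, σ', m, hsorted, hstep, hrun => by
      cases hrun with
      | cons h2 hrest =>
        simp only [List.map_cons, List.pairwise_cons] at hsorted
        by_cases hle : m.2 ≤ m2.2
        · refine ⟨m :: m2 :: ms, .cons hstep (.cons h2 hrest), .refl _, ?_⟩
          simp only [List.map_cons, List.pairwise_cons]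
          refine ⟨?_, hsorted⟩
          intro b hb
          rcases List.mem_cons.mp hb with rfl | hb'
          · exact hle
          · exact le_trans hle (hsorted.1 b hb')
        · push_neg at hle
          obtain ⟨σm, hA, hB⟩ := swap_step hv hle hstep h2
          obtain ⟨ms', hrun', hperm', hsorted'⟩ :=
            run_insert hv ms σm _ σ' m hsorted.2 hB hrest
          refine ⟨m2 :: ms', .cons hA hrun', ?_, ?_⟩
          · exact (hperm'.cons m2).trans ((List.Perm.swap m m2 ms))
          · simp only [List.map_cons, List.pairwise_cons]
            refine ⟨?_, hsorted'⟩
            intro b hb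
            have : b ∈ (m :: ms).map Prod.snd :=
              (hperm'.map Prod.snd).mem_iff.mp hb
            simp only [List.map_cons, List.mem_cons] at this
            rcases this with rfl | hb'
            · omega
            · exact hsorted.1 b hb'

lemma run_sort {P : Protocol Q D dim} (hv : P.v = 0) :
    ∀ (ms : List (Move Q D dim)) (σ0 σ : Abs Q dim), AbsRun P σ0 ms σ →
    ∃ ms', AbsRun P σ0 ms' σ ∧ ms'.Perm ms ∧
      List.Pairwise (· ≤ ·) (ms'.map Prod.snd)
  | [], σ0, σ, hrun => by
      cases hrun
      exact ⟨[], .nil _, .refl _, by simp⟩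
  | m :: ms, σ0, σ, hrun => by
      cases hrun with
      | cons h1 hrest =>
        obtain ⟨ms'', hrun'', hperm'', hsorted''⟩ := run_sort hv ms _ σ hrest
        obtain ⟨ms', hrun', hperm', hsorted'⟩ :=
          run_insert hv ms'' σ0 _ σ m hsorted'' h1 hrun''
        exact ⟨ms', hrun', hperm'.trans (hperm''.cons m), hsorted'⟩

end Aux

/-- Reordering executions round by round when `v = 0`. -/
theorem reorder_execution_v0 {Q D : Type} {dim : ℕ}
    (P : Protocol Q D dim) (hv : P.v = 0)
    (ms : List (Move Q D dim)) (σ : Abs Q dim)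
    (hrun : AbsRun P (Abs.init P) ms σ) :
    ∃ ms' : List (Move Q D dim), ∃ σ' : Abs Q dim,
      AbsRun P (Abs.init P) ms' σ' ∧
      ms'.Perm ms ∧
      List.Pairwise (· ≤ ·) (ms'.map Prod.snd) ∧
      σ.S ⊆ σ'.S ∧ σ.W = σ'.W := by
  obtain ⟨ms', hrun', hperm', hsorted'⟩ := run_sort hv ms _ σ hrun
  exact ⟨ms', σ, hrun', hperm', hsorted', le_refl _, rfl⟩
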